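/- For every n with n = 7 or n ≥ 9, the reset threshold of the automaton 𝒜_n is exactly 4n − 13. -/

import Mathlib

/-- The two letters of a binary alphabet. -/
inductive Letter where
  | a : Letter
  | b : Letter
deriving DecidableEq

/-- The transition function of the automaton `𝒜ₙ` on the state set
`Qₙ = {0, 1, …, n-1}` (represented inside `ℕ`):
`δ(0,a)=δ(0,b)=0`; `δ(1,a)=0`, `δ(2,a)=4`, `δ(3,a)=2`, `δ(4,a)=3`;
`δ(1,b)=3`, `δ(2,b)=1`, `δ(3,b)=2`; and for `4 ≤ j ≤ n-1`:
`δ(j,a) = j-1` if `j ≥ 6` is even, `δ(j,a) = j+1` if `j ≥ 5` is odd and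
`j ≠ n-1`, `δ(j,a) = j` if `j = n-1` is odd; `δ(j,b) = j-1` if `j ≥ 5` is odd,
`δ(j,b) = j+1` if `j ≥ 4` is even and `j ≠ n-1`, `δ(j,b) = j` if `j = n-1`
is even. -/
def anDelta (n : ℕ) (q : ℕ) (ℓ : Letter) : ℕ :=
  match q, ℓ with
  | 0, _ => 0
  | 1, Letter.a => 0
  | 1, Letter.b => 3
  | 2, Letter.a => 4
  | 2, Letter.b => 1
  | 3, _ => 2
  | 4, Letter.a => 3
  | j, Letter.a => if j % 2 = 1 then (if j = n - 1 then j else j + 1) else j - 1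
  | j, Letter.b => if j % 2 = 0 then (if j = n - 1 then j else j + 1) else j - 1

/-- Extension of the transition function of `𝒜ₙ` to words:
`δ(q, uv) = δ(δ(q, u), v)`. -/
def anStar (n : ℕ) (q : ℕ) (w : List Letter) : ℕ :=
  w.foldl (anDelta n) q

/-- The reset threshold of `𝒜ₙ`: the minimum length of a word `w` with
`δ(p, w) = δ(q, w)` for all `p, q ∈ Qₙ`. -/
noncomputable def anResetThreshold (n : ℕ) : ℕ :=
  sInf {l : ℕ | ∃ w : List Letter,
    (∀ p q : ℕ, p < n → q < n → anStar n p w = anStar n q w) ∧ w.length = l}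

/-! ### Basic lemmas -/

lemma anStar_cons (n q : ℕ) (l : Letter) (w : List Letter) :
    anStar n q (l :: w) = anStar n (anDelta n q l) w := rfl

lemma anStar_append (n q : ℕ) (u v : List Letter) :
    anStar n q (u ++ v) = anStar n (anStar n q u) v :=
  List.foldl_append

lemma anStar_zero (n : ℕ) (w : List Letter) : anStar n 0 w = 0 := by
  induction w with
  | nil => rfl
  | cons l w ih => cases l <;> simpa [anStar_cons, anDelta] using ih

/-! ### Single-letter transition lemmas -/

lemma d0a (n : ℕ) : anDelta n 0 Letter.a = 0 := rfl
lemma d0b (n : ℕ) : anDelta n 0 Letter.b = 0 := rfl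
lemma d1a (n : ℕ) : anDelta n 1 Letter.a = 0 := rfl
lemma d1b (n : ℕ) : anDelta n 1 Letter.b = 3 := rfl
lemma d2a (n : ℕ) : anDelta n 2 Letter.a = 4 := rfl
lemma d2b (n : ℕ) : anDelta n 2 Letter.b = 1 := rfl
lemma d3a (n : ℕ) : anDelta n 3 Letter.a = 2 := rfl
lemma d3b (n : ℕ) : anDelta n 3 Letter.b = 2 := rfl
lemma d4a (n : ℕ) : anDelta n 4 Letter.a = 3 := rfl

lemma d4b (n : ℕ) (hn : 7 ≤ n) : anDelta n 4 Letter.b = 5 := by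
  have h : anDelta n 4 Letter.b = if 4 = n - 1 then 4 else 5 := rfl
  rw [h, if_neg (by omega)]

lemma dAe (n q r : ℕ) (h2 : q % 2 = 0) (h6 : 6 ≤ q) (hr : q = r + 1) : anDelta n q Letter.a = r := by
  obtain ⟨t, rfl⟩ : ∃ t, q = t + 5 := ⟨q - 5, by omega⟩
  have h : anDelta n (t+5) Letter.a
      = if (t+5) % 2 = 1 then (if t+5 = n - 1 then t+5 else t+5+1) else (t+5) - 1 := rfl
  rw [h, if_neg (by omega)]; omega

lemma dAo (n q r : ℕ) (h2 : q % 2 = 1) (h5 : 5 ≤ q) (hne : q ≠ n - 1) (hr : r = q + 1) :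
    anDelta n q Letter.a = r := by
  obtain ⟨t, rfl⟩ : ∃ t, q = t + 5 := ⟨q - 5, by omega⟩
  have h : anDelta n (t+5) Letter.a
      = if (t+5) % 2 = 1 then (if t+5 = n - 1 then t+5 else t+5+1) else (t+5) - 1 := rfl
  rw [h, if_pos (by omega), if_neg hne]; omega

lemma dAotop (n q : ℕ) (h2 : q % 2 = 1) (h5 : 5 ≤ q) (he : q = n - 1) : anDelta n q Letter.a = q := by
  obtain ⟨t, rfl⟩ : ∃ t, q = t + 5 := ⟨q - 5, by omega⟩
  have h : anDelta n (t+5) Letter.a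
      = if (t+5) % 2 = 1 then (if t+5 = n - 1 then t+5 else t+5+1) else (t+5) - 1 := rfl
  rw [h, if_pos (by omega), if_pos he]

lemma dBo (n q r : ℕ) (h2 : q % 2 = 1) (h5 : 5 ≤ q) (hr : q = r + 1) : anDelta n q Letter.b = r := by
  obtain ⟨t, rfl⟩ : ∃ t, q = t + 5 := ⟨q - 5, by omega⟩
  have h : anDelta n (t+5) Letter.b
      = if (t+5) % 2 = 0 then (if t+5 = n - 1 then t+5 else t+5+1) else (t+5) - 1 := rfl
  rw [h, if_neg (by omega)]; omega

lemma dBe (n q r : ℕ) (h2 : q % 2 = 0) (h5 : 5 ≤ q) (hne : q ≠ n - 1) (hr : r = q + 1) :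
    anDelta n q Letter.b = r := by
  obtain ⟨t, rfl⟩ : ∃ t, q = t + 5 := ⟨q - 5, by omega⟩
  have h : anDelta n (t+5) Letter.b
      = if (t+5) % 2 = 0 then (if t+5 = n - 1 then t+5 else t+5+1) else (t+5) - 1 := rfl
  rw [h, if_pos (by omega), if_neg hne]; omega

lemma dBetop (n q : ℕ) (h2 : q % 2 = 0) (h5 : 5 ≤ q) (he : q = n - 1) : anDelta n q Letter.b = q := by
  obtain ⟨t, rfl⟩ : ∃ t, q = t + 5 := ⟨q - 5, by omega⟩
  have h : anDelta n (t+5) Letter.b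
      = if (t+5) % 2 = 0 then (if t+5 = n - 1 then t+5 else t+5+1) else (t+5) - 1 := rfl
  rw [h, if_pos (by omega), if_pos he]

/-! ### The words -/

def wP : List Letter := [.a, .b, .a, .a, .b, .a, .a, .b, .b]
def wB : List Letter := [.a, .b, .a, .b, .a, .a, .b, .b]
def wE : List Letter := [.a, .b, .a, .b, .b, .b, .a, .b, .a, .a, .b, .b]
def wT : List Letter := [.a, .b, .a, .a, .b, .a]

def wBs : ℕ → List Letter
  | 0 => []
  | k+1 => wB ++ wBs k

lemma wBs_length (k : ℕ) : (wBs k).length = 8 * k := by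
  induction k with
  | zero => rfl
  | succ k ih => simp [wBs, wB, ih]; omega

lemma wBs_succ_append (k : ℕ) (u : List Letter) :
    wBs (k+1) ++ u = wB ++ (wBs k ++ u) := by
  simp [wBs, List.append_assoc]
lemma P0 (n : ℕ) (hn : 9 ≤ n) (rest : List Letter) :
    anStar n (0) (wP ++ rest) = anStar n (0) rest := by
  show anStar n (0) (.a :: .b :: .a :: .a :: .b :: .a :: .a :: .b :: .b :: rest) = _
  rw [anStar_cons, d0a n]
  rw [anStar_cons, d0b n]
  rw [anStar_cons, d0a n]
  rw [anStar_cons, d0a n]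
  rw [anStar_cons, d0b n]
  rw [anStar_cons, d0a n]
  rw [anStar_cons, d0a n]
  rw [anStar_cons, d0b n]
  rw [anStar_cons, d0b n]

lemma P1 (n : ℕ) (hn : 9 ≤ n) (rest : List Letter) :
    anStar n (1) (wP ++ rest) = anStar n (0) rest := by
  show anStar n (1) (.a :: .b :: .a :: .a :: .b :: .a :: .a :: .b :: .b :: rest) = _
  rw [anStar_cons, d1a n]
  rw [anStar_cons, d0b n]
  rw [anStar_cons, d0a n]
  rw [anStar_cons, d0a n]
  rw [anStar_cons, d0b n]
  rw [anStar_cons, d0a n]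
  rw [anStar_cons, d0a n]
  rw [anStar_cons, d0b n]
  rw [anStar_cons, d0b n]

lemma P2 (n : ℕ) (hn : 9 ≤ n) (rest : List Letter) :
    anStar n (2) (wP ++ rest) = anStar n (3) rest := by
  show anStar n (2) (.a :: .b :: .a :: .a :: .b :: .a :: .a :: .b :: .b :: rest) = _
  rw [anStar_cons, d2a n]
  rw [anStar_cons, d4b n (by omega)]
  rw [anStar_cons, dAo n (5) (6) (by omega) (by omega) (by omega) (by omega)]
  rw [anStar_cons, dAe n (6) (5) (by omega) (by omega) (by omega)]
  rw [anStar_cons, dBo n (5) (4) (by omega) (by omega) (by omega)]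
  rw [anStar_cons, d4a n]
  rw [anStar_cons, d3a n]
  rw [anStar_cons, d2b n]
  rw [anStar_cons, d1b n]

lemma P3 (n : ℕ) (hn : 9 ≤ n) (rest : List Letter) :
    anStar n (3) (wP ++ rest) = anStar n (0) rest := by
  show anStar n (3) (.a :: .b :: .a :: .a :: .b :: .a :: .a :: .b :: .b :: rest) = _
  rw [anStar_cons, d3a n]
  rw [anStar_cons, d2b n]
  rw [anStar_cons, d1a n]
  rw [anStar_cons, d0a n]
  rw [anStar_cons, d0b n]
  rw [anStar_cons, d0a n]
  rw [anStar_cons, d0a n]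
  rw [anStar_cons, d0b n]
  rw [anStar_cons, d0b n]

lemma P4 (n : ℕ) (hn : 9 ≤ n) (rest : List Letter) :
    anStar n (4) (wP ++ rest) = anStar n (1) rest := by
  show anStar n (4) (.a :: .b :: .a :: .a :: .b :: .a :: .a :: .b :: .b :: rest) = _
  rw [anStar_cons, d4a n]
  rw [anStar_cons, d3b n]
  rw [anStar_cons, d2a n]
  rw [anStar_cons, d4a n]
  rw [anStar_cons, d3b n]
  rw [anStar_cons, d2a n]
  rw [anStar_cons, d4a n]
  rw [anStar_cons, d3b n]
  rw [anStar_cons, d2b n]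

lemma P5 (n : ℕ) (hn : 9 ≤ n) (rest : List Letter) :
    anStar n (5) (wP ++ rest) = anStar n (6) rest := by
  show anStar n (5) (.a :: .b :: .a :: .a :: .b :: .a :: .a :: .b :: .b :: rest) = _
  rw [anStar_cons, dAo n (5) (6) (by omega) (by omega) (by omega) (by omega)]
  rw [anStar_cons, dBe n (6) (7) (by omega) (by omega) (by omega) (by omega)]
  rw [anStar_cons, dAo n (7) (8) (by omega) (by omega) (by omega) (by omega)]
  rw [anStar_cons, dAe n (8) (7) (by omega) (by omega) (by omega)]
  rw [anStar_cons, dBo n (7) (6) (by omega) (by omega) (by omega)]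
  rw [anStar_cons, dAe n (6) (5) (by omega) (by omega) (by omega)]
  rw [anStar_cons, dAo n (5) (6) (by omega) (by omega) (by omega) (by omega)]
  rw [anStar_cons, dBe n (6) (7) (by omega) (by omega) (by omega) (by omega)]
  rw [anStar_cons, dBo n (7) (6) (by omega) (by omega) (by omega)]

lemma P6 (n : ℕ) (hn : 9 ≤ n) (rest : List Letter) :
    anStar n (6) (wP ++ rest) = anStar n (0) rest := by
  show anStar n (6) (.a :: .b :: .a :: .a :: .b :: .a :: .a :: .b :: .b :: rest) = _
  rw [anStar_cons, dAe n (6) (5) (by omega) (by omega) (by omega)]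
  rw [anStar_cons, dBo n (5) (4) (by omega) (by omega) (by omega)]
  rw [anStar_cons, d4a n]
  rw [anStar_cons, d3a n]
  rw [anStar_cons, d2b n]
  rw [anStar_cons, d1a n]
  rw [anStar_cons, d0a n]
  rw [anStar_cons, d0b n]
  rw [anStar_cons, d0b n]

lemma Bv0 (n : ℕ) (hn : 9 ≤ n) (rest : List Letter) :
    anStar n (0) (wB ++ rest) = anStar n (0) rest := by
  show anStar n (0) (.a :: .b :: .a :: .b :: .a :: .a :: .b :: .b :: rest) = _
  rw [anStar_cons, d0a n]
  rw [anStar_cons, d0b n]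
  rw [anStar_cons, d0a n]
  rw [anStar_cons, d0b n]
  rw [anStar_cons, d0a n]
  rw [anStar_cons, d0a n]
  rw [anStar_cons, d0b n]
  rw [anStar_cons, d0b n]

lemma Bv1 (n : ℕ) (hn : 9 ≤ n) (rest : List Letter) :
    anStar n (1) (wB ++ rest) = anStar n (0) rest := by
  show anStar n (1) (.a :: .b :: .a :: .b :: .a :: .a :: .b :: .b :: rest) = _
  rw [anStar_cons, d1a n]
  rw [anStar_cons, d0b n]
  rw [anStar_cons, d0a n]
  rw [anStar_cons, d0b n]
  rw [anStar_cons, d0a n]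
  rw [anStar_cons, d0a n]
  rw [anStar_cons, d0b n]
  rw [anStar_cons, d0b n]

lemma Bv3 (n : ℕ) (hn : 9 ≤ n) (rest : List Letter) :
    anStar n (3) (wB ++ rest) = anStar n (0) rest := by
  show anStar n (3) (.a :: .b :: .a :: .b :: .a :: .a :: .b :: .b :: rest) = _
  rw [anStar_cons, d3a n]
  rw [anStar_cons, d2b n]
  rw [anStar_cons, d1a n]
  rw [anStar_cons, d0b n]
  rw [anStar_cons, d0a n]
  rw [anStar_cons, d0a n]
  rw [anStar_cons, d0b n]
  rw [anStar_cons, d0b n]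

lemma Bv6 (n : ℕ) (hn : 9 ≤ n) (rest : List Letter) :
    anStar n (6) (wB ++ rest) = anStar n (1) rest := by
  show anStar n (6) (.a :: .b :: .a :: .b :: .a :: .a :: .b :: .b :: rest) = _
  rw [anStar_cons, dAe n (6) (5) (by omega) (by omega) (by omega)]
  rw [anStar_cons, dBo n (5) (4) (by omega) (by omega) (by omega)]
  rw [anStar_cons, d4a n]
  rw [anStar_cons, d3b n]
  rw [anStar_cons, d2a n]
  rw [anStar_cons, d4a n]
  rw [anStar_cons, d3b n]
  rw [anStar_cons, d2b n]

lemma Bv8 (n : ℕ) (hn : 9 ≤ n) (rest : List Letter) :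
    anStar n (8) (wB ++ rest) = anStar n (3) rest := by
  show anStar n (8) (.a :: .b :: .a :: .b :: .a :: .a :: .b :: .b :: rest) = _
  rw [anStar_cons, dAe n (8) (7) (by omega) (by omega) (by omega)]
  rw [anStar_cons, dBo n (7) (6) (by omega) (by omega) (by omega)]
  rw [anStar_cons, dAe n (6) (5) (by omega) (by omega) (by omega)]
  rw [anStar_cons, dBo n (5) (4) (by omega) (by omega) (by omega)]
  rw [anStar_cons, d4a n]
  rw [anStar_cons, d3a n]
  rw [anStar_cons, d2b n]
  rw [anStar_cons, d1b n]

lemma Bv10 (n : ℕ) (hn : 16 ≤ n) (rest : List Letter) :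
    anStar n (10) (wB ++ rest) = anStar n (6) rest := by
  show anStar n (10) (.a :: .b :: .a :: .b :: .a :: .a :: .b :: .b :: rest) = _
  rw [anStar_cons, dAe n (10) (9) (by omega) (by omega) (by omega)]
  rw [anStar_cons, dBo n (9) (8) (by omega) (by omega) (by omega)]
  rw [anStar_cons, dAe n (8) (7) (by omega) (by omega) (by omega)]
  rw [anStar_cons, dBo n (7) (6) (by omega) (by omega) (by omega)]
  rw [anStar_cons, dAe n (6) (5) (by omega) (by omega) (by omega)]
  rw [anStar_cons, dAo n (5) (6) (by omega) (by omega) (by omega) (by omega)]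
  rw [anStar_cons, dBe n (6) (7) (by omega) (by omega) (by omega) (by omega)]
  rw [anStar_cons, dBo n (7) (6) (by omega) (by omega) (by omega)]

lemma Bv12 (n : ℕ) (hn : 16 ≤ n) (rest : List Letter) :
    anStar n (12) (wB ++ rest) = anStar n (8) rest := by
  show anStar n (12) (.a :: .b :: .a :: .b :: .a :: .a :: .b :: .b :: rest) = _
  rw [anStar_cons, dAe n (12) (11) (by omega) (by omega) (by omega)]
  rw [anStar_cons, dBo n (11) (10) (by omega) (by omega) (by omega)]
  rw [anStar_cons, dAe n (10) (9) (by omega) (by omega) (by omega)]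
  rw [anStar_cons, dBo n (9) (8) (by omega) (by omega) (by omega)]
  rw [anStar_cons, dAe n (8) (7) (by omega) (by omega) (by omega)]
  rw [anStar_cons, dAo n (7) (8) (by omega) (by omega) (by omega) (by omega)]
  rw [anStar_cons, dBe n (8) (9) (by omega) (by omega) (by omega) (by omega)]
  rw [anStar_cons, dBo n (9) (8) (by omega) (by omega) (by omega)]

lemma T0 (n : ℕ) (hn : 9 ≤ n) :
    anStar n (0) (wT) = 0 := by
  show anStar n (0) [.a, .b, .a, .a, .b, .a] = 0
  rw [anStar_cons, d0a n]
  rw [anStar_cons, d0b n]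
  rw [anStar_cons, d0a n]
  rw [anStar_cons, d0a n]
  rw [anStar_cons, d0b n]
  rw [anStar_cons, d0a n]
  rfl

lemma T1 (n : ℕ) (hn : 9 ≤ n) :
    anStar n (1) (wT) = 0 := by
  show anStar n (1) [.a, .b, .a, .a, .b, .a] = 0
  rw [anStar_cons, d1a n]
  rw [anStar_cons, d0b n]
  rw [anStar_cons, d0a n]
  rw [anStar_cons, d0a n]
  rw [anStar_cons, d0b n]
  rw [anStar_cons, d0a n]
  rfl

lemma T3 (n : ℕ) (hn : 9 ≤ n) :
    anStar n (3) (wT) = 0 := by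
  show anStar n (3) [.a, .b, .a, .a, .b, .a] = 0
  rw [anStar_cons, d3a n]
  rw [anStar_cons, d2b n]
  rw [anStar_cons, d1a n]
  rw [anStar_cons, d0a n]
  rw [anStar_cons, d0b n]
  rw [anStar_cons, d0a n]
  rfl

lemma T6 (n : ℕ) (hn : 9 ≤ n) :
    anStar n (6) (wT) = 0 := by
  show anStar n (6) [.a, .b, .a, .a, .b, .a] = 0
  rw [anStar_cons, dAe n (6) (5) (by omega) (by omega) (by omega)]
  rw [anStar_cons, dBo n (5) (4) (by omega) (by omega) (by omega)]
  rw [anStar_cons, d4a n]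
  rw [anStar_cons, d3a n]
  rw [anStar_cons, d2b n]
  rw [anStar_cons, d1a n]
  rfl

lemma EK0 (n : ℕ) (hn : 16 ≤ n) :
    anStar n (0) ((wE ++ wT)) = 0 := by
  show anStar n (0) [.a, .b, .a, .b, .b, .b, .a, .b, .a, .a, .b, .b, .a, .b, .a, .a, .b, .a] = 0
  rw [anStar_cons, d0a n]
  rw [anStar_cons, d0b n]
  rw [anStar_cons, d0a n]
  rw [anStar_cons, d0b n]
  rw [anStar_cons, d0b n]
  rw [anStar_cons, d0b n]
  rw [anStar_cons, d0a n]
  rw [anStar_cons, d0b n]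
  rw [anStar_cons, d0a n]
  rw [anStar_cons, d0a n]
  rw [anStar_cons, d0b n]
  rw [anStar_cons, d0b n]
  rw [anStar_cons, d0a n]
  rw [anStar_cons, d0b n]
  rw [anStar_cons, d0a n]
  rw [anStar_cons, d0a n]
  rw [anStar_cons, d0b n]
  rw [anStar_cons, d0a n]
  rfl

lemma EK1 (n : ℕ) (hn : 16 ≤ n) :
    anStar n (1) ((wE ++ wT)) = 0 := by
  show anStar n (1) [.a, .b, .a, .b, .b, .b, .a, .b, .a, .a, .b, .b, .a, .b, .a, .a, .b, .a] = 0
  rw [anStar_cons, d1a n]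
  rw [anStar_cons, d0b n]
  rw [anStar_cons, d0a n]
  rw [anStar_cons, d0b n]
  rw [anStar_cons, d0b n]
  rw [anStar_cons, d0b n]
  rw [anStar_cons, d0a n]
  rw [anStar_cons, d0b n]
  rw [anStar_cons, d0a n]
  rw [anStar_cons, d0a n]
  rw [anStar_cons, d0b n]
  rw [anStar_cons, d0b n]
  rw [anStar_cons, d0a n]
  rw [anStar_cons, d0b n]
  rw [anStar_cons, d0a n]
  rw [anStar_cons, d0a n]
  rw [anStar_cons, d0b n]
  rw [anStar_cons, d0a n]
  rfl

lemma EK3 (n : ℕ) (hn : 16 ≤ n) :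
    anStar n (3) ((wE ++ wT)) = 0 := by
  show anStar n (3) [.a, .b, .a, .b, .b, .b, .a, .b, .a, .a, .b, .b, .a, .b, .a, .a, .b, .a] = 0
  rw [anStar_cons, d3a n]
  rw [anStar_cons, d2b n]
  rw [anStar_cons, d1a n]
  rw [anStar_cons, d0b n]
  rw [anStar_cons, d0b n]
  rw [anStar_cons, d0b n]
  rw [anStar_cons, d0a n]
  rw [anStar_cons, d0b n]
  rw [anStar_cons, d0a n]
  rw [anStar_cons, d0a n]
  rw [anStar_cons, d0b n]
  rw [anStar_cons, d0b n]
  rw [anStar_cons, d0a n]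
  rw [anStar_cons, d0b n]
  rw [anStar_cons, d0a n]
  rw [anStar_cons, d0a n]
  rw [anStar_cons, d0b n]
  rw [anStar_cons, d0a n]
  rfl

lemma EK6 (n : ℕ) (hn : 16 ≤ n) :
    anStar n (6) ((wE ++ wT)) = 0 := by
  show anStar n (6) [.a, .b, .a, .b, .b, .b, .a, .b, .a, .a, .b, .b, .a, .b, .a, .a, .b, .a] = 0
  rw [anStar_cons, dAe n (6) (5) (by omega) (by omega) (by omega)]
  rw [anStar_cons, dBo n (5) (4) (by omega) (by omega) (by omega)]
  rw [anStar_cons, d4a n]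
  rw [anStar_cons, d3b n]
  rw [anStar_cons, d2b n]
  rw [anStar_cons, d1b n]
  rw [anStar_cons, d3a n]
  rw [anStar_cons, d2b n]
  rw [anStar_cons, d1a n]
  rw [anStar_cons, d0a n]
  rw [anStar_cons, d0b n]
  rw [anStar_cons, d0b n]
  rw [anStar_cons, d0a n]
  rw [anStar_cons, d0b n]
  rw [anStar_cons, d0a n]
  rw [anStar_cons, d0a n]
  rw [anStar_cons, d0b n]
  rw [anStar_cons, d0a n]
  rfl

lemma EK8 (n : ℕ) (hn : 16 ≤ n) :
    anStar n (8) ((wE ++ wT)) = 0 := by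
  show anStar n (8) [.a, .b, .a, .b, .b, .b, .a, .b, .a, .a, .b, .b, .a, .b, .a, .a, .b, .a] = 0
  rw [anStar_cons, dAe n (8) (7) (by omega) (by omega) (by omega)]
  rw [anStar_cons, dBo n (7) (6) (by omega) (by omega) (by omega)]
  rw [anStar_cons, dAe n (6) (5) (by omega) (by omega) (by omega)]
  rw [anStar_cons, dBo n (5) (4) (by omega) (by omega) (by omega)]
  rw [anStar_cons, d4b n (by omega)]
  rw [anStar_cons, dBo n (5) (4) (by omega) (by omega) (by omega)]
  rw [anStar_cons, d4a n]
  rw [anStar_cons, d3b n]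
  rw [anStar_cons, d2a n]
  rw [anStar_cons, d4a n]
  rw [anStar_cons, d3b n]
  rw [anStar_cons, d2b n]
  rw [anStar_cons, d1a n]
  rw [anStar_cons, d0b n]
  rw [anStar_cons, d0a n]
  rw [anStar_cons, d0a n]
  rw [anStar_cons, d0b n]
  rw [anStar_cons, d0a n]
  rfl

lemma EK10 (n : ℕ) (hn : 16 ≤ n) :
    anStar n (10) ((wE ++ wT)) = 0 := by
  show anStar n (10) [.a, .b, .a, .b, .b, .b, .a, .b, .a, .a, .b, .b, .a, .b, .a, .a, .b, .a] = 0
  rw [anStar_cons, dAe n (10) (9) (by omega) (by omega) (by omega)]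
  rw [anStar_cons, dBo n (9) (8) (by omega) (by omega) (by omega)]
  rw [anStar_cons, dAe n (8) (7) (by omega) (by omega) (by omega)]
  rw [anStar_cons, dBo n (7) (6) (by omega) (by omega) (by omega)]
  rw [anStar_cons, dBe n (6) (7) (by omega) (by omega) (by omega) (by omega)]
  rw [anStar_cons, dBo n (7) (6) (by omega) (by omega) (by omega)]
  rw [anStar_cons, dAe n (6) (5) (by omega) (by omega) (by omega)]
  rw [anStar_cons, dBo n (5) (4) (by omega) (by omega) (by omega)]
  rw [anStar_cons, d4a n]
  rw [anStar_cons, d3a n]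
  rw [anStar_cons, d2b n]
  rw [anStar_cons, d1b n]
  rw [anStar_cons, d3a n]
  rw [anStar_cons, d2b n]
  rw [anStar_cons, d1a n]
  rw [anStar_cons, d0a n]
  rw [anStar_cons, d0b n]
  rw [anStar_cons, d0a n]
  rfl

lemma EK12 (n : ℕ) (hn : 16 ≤ n) :
    anStar n (12) ((wE ++ wT)) = 0 := by
  show anStar n (12) [.a, .b, .a, .b, .b, .b, .a, .b, .a, .a, .b, .b, .a, .b, .a, .a, .b, .a] = 0
  rw [anStar_cons, dAe n (12) (11) (by omega) (by omega) (by omega)]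
  rw [anStar_cons, dBo n (11) (10) (by omega) (by omega) (by omega)]
  rw [anStar_cons, dAe n (10) (9) (by omega) (by omega) (by omega)]
  rw [anStar_cons, dBo n (9) (8) (by omega) (by omega) (by omega)]
  rw [anStar_cons, dBe n (8) (9) (by omega) (by omega) (by omega) (by omega)]
  rw [anStar_cons, dBo n (9) (8) (by omega) (by omega) (by omega)]
  rw [anStar_cons, dAe n (8) (7) (by omega) (by omega) (by omega)]
  rw [anStar_cons, dBo n (7) (6) (by omega) (by omega) (by omega)]
  rw [anStar_cons, dAe n (6) (5) (by omega) (by omega) (by omega)]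
  rw [anStar_cons, dAo n (5) (6) (by omega) (by omega) (by omega) (by omega)]
  rw [anStar_cons, dBe n (6) (7) (by omega) (by omega) (by omega) (by omega)]
  rw [anStar_cons, dBo n (7) (6) (by omega) (by omega) (by omega)]
  rw [anStar_cons, dAe n (6) (5) (by omega) (by omega) (by omega)]
  rw [anStar_cons, dBo n (5) (4) (by omega) (by omega) (by omega)]
  rw [anStar_cons, d4a n]
  rw [anStar_cons, d3a n]
  rw [anStar_cons, d2b n]
  rw [anStar_cons, d1a n]
  rfl

lemma stepBD (n : ℕ) (m : ℕ) (hn : 2*m+10 ≤ n - 1) (rest : List Letter) :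
    anStar n (2*m+10) (wB ++ rest) = anStar n (2*m+6) rest := by
  show anStar n (2*m+10) (.a :: .b :: .a :: .b :: .a :: .a :: .b :: .b :: rest) = _
  rw [anStar_cons, dAe n (2*m+10) (2*m+9) (by omega) (by omega) (by omega)]
  rw [anStar_cons, dBo n (2*m+9) (2*m+8) (by omega) (by omega) (by omega)]
  rw [anStar_cons, dAe n (2*m+8) (2*m+7) (by omega) (by omega) (by omega)]
  rw [anStar_cons, dBo n (2*m+7) (2*m+6) (by omega) (by omega) (by omega)]
  rw [anStar_cons, dAe n (2*m+6) (2*m+5) (by omega) (by omega) (by omega)]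
  rw [anStar_cons, dAo n (2*m+5) (2*m+6) (by omega) (by omega) (by omega) (by omega)]
  rw [anStar_cons, dBe n (2*m+6) (2*m+7) (by omega) (by omega) (by omega) (by omega)]
  rw [anStar_cons, dBo n (2*m+7) (2*m+6) (by omega) (by omega) (by omega)]

lemma stepBA (n : ℕ) (m : ℕ) (hn : 2*m+10 ≤ n - 1) (rest : List Letter) :
    anStar n (2*m+5) (wB ++ rest) = anStar n (2*m+9) rest := by
  show anStar n (2*m+5) (.a :: .b :: .a :: .b :: .a :: .a :: .b :: .b :: rest) = _
  rw [anStar_cons, dAo n (2*m+5) (2*m+6) (by omega) (by omega) (by omega) (by omega)]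
  rw [anStar_cons, dBe n (2*m+6) (2*m+7) (by omega) (by omega) (by omega) (by omega)]
  rw [anStar_cons, dAo n (2*m+7) (2*m+8) (by omega) (by omega) (by omega) (by omega)]
  rw [anStar_cons, dBe n (2*m+8) (2*m+9) (by omega) (by omega) (by omega) (by omega)]
  rw [anStar_cons, dAo n (2*m+9) (2*m+10) (by omega) (by omega) (by omega) (by omega)]
  rw [anStar_cons, dAe n (2*m+10) (2*m+9) (by omega) (by omega) (by omega)]
  rw [anStar_cons, dBo n (2*m+9) (2*m+8) (by omega) (by omega) (by omega)]
  rw [anStar_cons, dBe n (2*m+8) (2*m+9) (by omega) (by omega) (by omega) (by omega)]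

lemma stepPodd (n : ℕ) (m : ℕ) (hn : 2*m+10 ≤ n - 1) (rest : List Letter) :
    anStar n (2*m+7) (wP ++ rest) = anStar n (2*m+8) rest := by
  show anStar n (2*m+7) (.a :: .b :: .a :: .a :: .b :: .a :: .a :: .b :: .b :: rest) = _
  rw [anStar_cons, dAo n (2*m+7) (2*m+8) (by omega) (by omega) (by omega) (by omega)]
  rw [anStar_cons, dBe n (2*m+8) (2*m+9) (by omega) (by omega) (by omega) (by omega)]
  rw [anStar_cons, dAo n (2*m+9) (2*m+10) (by omega) (by omega) (by omega) (by omega)]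
  rw [anStar_cons, dAe n (2*m+10) (2*m+9) (by omega) (by omega) (by omega)]
  rw [anStar_cons, dBo n (2*m+9) (2*m+8) (by omega) (by omega) (by omega)]
  rw [anStar_cons, dAe n (2*m+8) (2*m+7) (by omega) (by omega) (by omega)]
  rw [anStar_cons, dAo n (2*m+7) (2*m+8) (by omega) (by omega) (by omega) (by omega)]
  rw [anStar_cons, dBe n (2*m+8) (2*m+9) (by omega) (by omega) (by omega) (by omega)]
  rw [anStar_cons, dBo n (2*m+9) (2*m+8) (by omega) (by omega) (by omega)]

lemma stepPeven (n : ℕ) (m : ℕ) (hn : 2*m+8 ≤ n - 1) (rest : List Letter) :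
    anStar n (2*m+8) (wP ++ rest) = anStar n (2*m+7) rest := by
  show anStar n (2*m+8) (.a :: .b :: .a :: .a :: .b :: .a :: .a :: .b :: .b :: rest) = _
  rw [anStar_cons, dAe n (2*m+8) (2*m+7) (by omega) (by omega) (by omega)]
  rw [anStar_cons, dBo n (2*m+7) (2*m+6) (by omega) (by omega) (by omega)]
  rw [anStar_cons, dAe n (2*m+6) (2*m+5) (by omega) (by omega) (by omega)]
  rw [anStar_cons, dAo n (2*m+5) (2*m+6) (by omega) (by omega) (by omega) (by omega)]
  rw [anStar_cons, dBe n (2*m+6) (2*m+7) (by omega) (by omega) (by omega) (by omega)]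
  rw [anStar_cons, dAo n (2*m+7) (2*m+8) (by omega) (by omega) (by omega) (by omega)]
  rw [anStar_cons, dAe n (2*m+8) (2*m+7) (by omega) (by omega) (by omega)]
  rw [anStar_cons, dBo n (2*m+7) (2*m+6) (by omega) (by omega) (by omega)]
  rw [anStar_cons, dBe n (2*m+6) (2*m+7) (by omega) (by omega) (by omega) (by omega)]

lemma stepBn2odd (n : ℕ) (t : ℕ) (hn : n = 2*t+9) (rest : List Letter) :
    anStar n (2*t+7) (wB ++ rest) = anStar n (2*t+6) rest := by
  show anStar n (2*t+7) (.a :: .b :: .a :: .b :: .a :: .a :: .b :: .b :: rest) = _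
  rw [anStar_cons, dAo n (2*t+7) (2*t+8) (by omega) (by omega) (by omega) (by omega)]
  rw [anStar_cons, dBetop n (2*t+8) (by omega) (by omega) (by omega)]
  rw [anStar_cons, dAe n (2*t+8) (2*t+7) (by omega) (by omega) (by omega)]
  rw [anStar_cons, dBo n (2*t+7) (2*t+6) (by omega) (by omega) (by omega)]
  rw [anStar_cons, dAe n (2*t+6) (2*t+5) (by omega) (by omega) (by omega)]
  rw [anStar_cons, dAo n (2*t+5) (2*t+6) (by omega) (by omega) (by omega) (by omega)]
  rw [anStar_cons, dBe n (2*t+6) (2*t+7) (by omega) (by omega) (by omega) (by omega)]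
  rw [anStar_cons, dBo n (2*t+7) (2*t+6) (by omega) (by omega) (by omega)]

lemma stepBn4odd (n : ℕ) (t : ℕ) (hn : n = 2*t+9) (rest : List Letter) :
    anStar n (2*t+5) (wB ++ rest) = anStar n (2*t+8) rest := by
  show anStar n (2*t+5) (.a :: .b :: .a :: .b :: .a :: .a :: .b :: .b :: rest) = _
  rw [anStar_cons, dAo n (2*t+5) (2*t+6) (by omega) (by omega) (by omega) (by omega)]
  rw [anStar_cons, dBe n (2*t+6) (2*t+7) (by omega) (by omega) (by omega) (by omega)]
  rw [anStar_cons, dAo n (2*t+7) (2*t+8) (by omega) (by omega) (by omega) (by omega)]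
  rw [anStar_cons, dBetop n (2*t+8) (by omega) (by omega) (by omega)]
  rw [anStar_cons, dAe n (2*t+8) (2*t+7) (by omega) (by omega) (by omega)]
  rw [anStar_cons, dAo n (2*t+7) (2*t+8) (by omega) (by omega) (by omega) (by omega)]
  rw [anStar_cons, dBetop n (2*t+8) (by omega) (by omega) (by omega)]
  rw [anStar_cons, dBetop n (2*t+8) (by omega) (by omega) (by omega)]

lemma stepPn2odd (n : ℕ) (t : ℕ) (hn : n = 2*t+9) (rest : List Letter) :
    anStar n (2*t+7) (wP ++ rest) = anStar n (2*t+8) rest := by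
  show anStar n (2*t+7) (.a :: .b :: .a :: .a :: .b :: .a :: .a :: .b :: .b :: rest) = _
  rw [anStar_cons, dAo n (2*t+7) (2*t+8) (by omega) (by omega) (by omega) (by omega)]
  rw [anStar_cons, dBetop n (2*t+8) (by omega) (by omega) (by omega)]
  rw [anStar_cons, dAe n (2*t+8) (2*t+7) (by omega) (by omega) (by omega)]
  rw [anStar_cons, dAo n (2*t+7) (2*t+8) (by omega) (by omega) (by omega) (by omega)]
  rw [anStar_cons, dBetop n (2*t+8) (by omega) (by omega) (by omega)]
  rw [anStar_cons, dAe n (2*t+8) (2*t+7) (by omega) (by omega) (by omega)]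
  rw [anStar_cons, dAo n (2*t+7) (2*t+8) (by omega) (by omega) (by omega) (by omega)]
  rw [anStar_cons, dBetop n (2*t+8) (by omega) (by omega) (by omega)]
  rw [anStar_cons, dBetop n (2*t+8) (by omega) (by omega) (by omega)]

lemma stepBn5e (n : ℕ) (t : ℕ) (hn : n = 2*t+16) (rest : List Letter) :
    anStar n (2*t+11) (wB ++ rest) = anStar n (2*t+15) rest := by
  show anStar n (2*t+11) (.a :: .b :: .a :: .b :: .a :: .a :: .b :: .b :: rest) = _
  rw [anStar_cons, dAo n (2*t+11) (2*t+12) (by omega) (by omega) (by omega) (by omega)]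
  rw [anStar_cons, dBe n (2*t+12) (2*t+13) (by omega) (by omega) (by omega) (by omega)]
  rw [anStar_cons, dAo n (2*t+13) (2*t+14) (by omega) (by omega) (by omega) (by omega)]
  rw [anStar_cons, dBe n (2*t+14) (2*t+15) (by omega) (by omega) (by omega) (by omega)]
  rw [anStar_cons, dAotop n (2*t+15) (by omega) (by omega) (by omega)]
  rw [anStar_cons, dAotop n (2*t+15) (by omega) (by omega) (by omega)]
  rw [anStar_cons, dBo n (2*t+15) (2*t+14) (by omega) (by omega) (by omega)]
  rw [anStar_cons, dBe n (2*t+14) (2*t+15) (by omega) (by omega) (by omega) (by omega)]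

lemma stepBn3e (n : ℕ) (t : ℕ) (hn : n = 2*t+16) (rest : List Letter) :
    anStar n (2*t+13) (wB ++ rest) = anStar n (2*t+14) rest := by
  show anStar n (2*t+13) (.a :: .b :: .a :: .b :: .a :: .a :: .b :: .b :: rest) = _
  rw [anStar_cons, dAo n (2*t+13) (2*t+14) (by omega) (by omega) (by omega) (by omega)]
  rw [anStar_cons, dBe n (2*t+14) (2*t+15) (by omega) (by omega) (by omega) (by omega)]
  rw [anStar_cons, dAotop n (2*t+15) (by omega) (by omega) (by omega)]
  rw [anStar_cons, dBo n (2*t+15) (2*t+14) (by omega) (by omega) (by omega)]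
  rw [anStar_cons, dAe n (2*t+14) (2*t+13) (by omega) (by omega) (by omega)]
  rw [anStar_cons, dAo n (2*t+13) (2*t+14) (by omega) (by omega) (by omega) (by omega)]
  rw [anStar_cons, dBe n (2*t+14) (2*t+15) (by omega) (by omega) (by omega) (by omega)]
  rw [anStar_cons, dBo n (2*t+15) (2*t+14) (by omega) (by omega) (by omega)]

lemma stepBn1e (n : ℕ) (t : ℕ) (hn : n = 2*t+16) (rest : List Letter) :
    anStar n (2*t+15) (wB ++ rest) = anStar n (2*t+12) rest := by
  show anStar n (2*t+15) (.a :: .b :: .a :: .b :: .a :: .a :: .b :: .b :: rest) = _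
  rw [anStar_cons, dAotop n (2*t+15) (by omega) (by omega) (by omega)]
  rw [anStar_cons, dBo n (2*t+15) (2*t+14) (by omega) (by omega) (by omega)]
  rw [anStar_cons, dAe n (2*t+14) (2*t+13) (by omega) (by omega) (by omega)]
  rw [anStar_cons, dBo n (2*t+13) (2*t+12) (by omega) (by omega) (by omega)]
  rw [anStar_cons, dAe n (2*t+12) (2*t+11) (by omega) (by omega) (by omega)]
  rw [anStar_cons, dAo n (2*t+11) (2*t+12) (by omega) (by omega) (by omega) (by omega)]
  rw [anStar_cons, dBe n (2*t+12) (2*t+13) (by omega) (by omega) (by omega) (by omega)]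
  rw [anStar_cons, dBo n (2*t+13) (2*t+12) (by omega) (by omega) (by omega)]

lemma stepPn3e (n : ℕ) (t : ℕ) (hn : n = 2*t+16) (rest : List Letter) :
    anStar n (2*t+13) (wP ++ rest) = anStar n (2*t+14) rest := by
  show anStar n (2*t+13) (.a :: .b :: .a :: .a :: .b :: .a :: .a :: .b :: .b :: rest) = _
  rw [anStar_cons, dAo n (2*t+13) (2*t+14) (by omega) (by omega) (by omega) (by omega)]
  rw [anStar_cons, dBe n (2*t+14) (2*t+15) (by omega) (by omega) (by omega) (by omega)]
  rw [anStar_cons, dAotop n (2*t+15) (by omega) (by omega) (by omega)]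
  rw [anStar_cons, dAotop n (2*t+15) (by omega) (by omega) (by omega)]
  rw [anStar_cons, dBo n (2*t+15) (2*t+14) (by omega) (by omega) (by omega)]
  rw [anStar_cons, dAe n (2*t+14) (2*t+13) (by omega) (by omega) (by omega)]
  rw [anStar_cons, dAo n (2*t+13) (2*t+14) (by omega) (by omega) (by omega) (by omega)]
  rw [anStar_cons, dBe n (2*t+14) (2*t+15) (by omega) (by omega) (by omega) (by omega)]
  rw [anStar_cons, dBo n (2*t+15) (2*t+14) (by omega) (by omega) (by omega)]

lemma stepPn1e (n : ℕ) (t : ℕ) (hn : n = 2*t+16) (rest : List Letter) :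
    anStar n (2*t+15) (wP ++ rest) = anStar n (2*t+15) rest := by
  show anStar n (2*t+15) (.a :: .b :: .a :: .a :: .b :: .a :: .a :: .b :: .b :: rest) = _
  rw [anStar_cons, dAotop n (2*t+15) (by omega) (by omega) (by omega)]
  rw [anStar_cons, dBo n (2*t+15) (2*t+14) (by omega) (by omega) (by omega)]
  rw [anStar_cons, dAe n (2*t+14) (2*t+13) (by omega) (by omega) (by omega)]
  rw [anStar_cons, dAo n (2*t+13) (2*t+14) (by omega) (by omega) (by omega) (by omega)]
  rw [anStar_cons, dBe n (2*t+14) (2*t+15) (by omega) (by omega) (by omega) (by omega)]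
  rw [anStar_cons, dAotop n (2*t+15) (by omega) (by omega) (by omega)]
  rw [anStar_cons, dAotop n (2*t+15) (by omega) (by omega) (by omega)]
  rw [anStar_cons, dBo n (2*t+15) (2*t+14) (by omega) (by omega) (by omega)]
  rw [anStar_cons, dBe n (2*t+14) (2*t+15) (by omega) (by omega) (by omega) (by omega)]
/-! ### Synchronization: core and descent/ascent lemmas -/

lemma LCore (n : ℕ) (hn : 9 ≤ n) :
    ∀ r s, (s = 0 ∨ s = 1 ∨ s = 3 ∨ s = 6) → anStar n s (wBs r ++ wT) = 0 := by
  intro r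
  induction r with
  | zero =>
    intro s hs
    have e : wBs 0 ++ wT = wT := by simp [wBs]
    rw [e]
    rcases hs with rfl | rfl | rfl | rfl
    · exact T0 n hn
    · exact T1 n hn
    · exact T3 n hn
    · exact T6 n hn
  | succ r ih =>
    intro s hs
    rw [wBs_succ_append]
    rcases hs with rfl | rfl | rfl | rfl
    · rw [Bv0 n hn]; exact ih 0 (by tauto)
    · rw [Bv1 n hn]; exact ih 0 (by tauto)
    · rw [Bv3 n hn]; exact ih 0 (by tauto)
    · rw [Bv6 n hn]; exact ih 1 (by tauto)

lemma LDodd (t : ℕ) :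
    ∀ r s, s % 2 = 0 → 6 ≤ s → s ≤ 2*t+8 → s ≤ 4*r+6 →
      anStar (2*t+9) s (wBs r ++ wT) = 0 := by
  intro r
  induction r with
  | zero =>
    intro s h2 h6 hle hb
    have : s = 6 := by omega
    subst this
    exact LCore (2*t+9) (by omega) 0 6 (by tauto)
  | succ r ih =>
    intro s h2 h6 hle hb
    rw [wBs_succ_append]
    rcases (by omega : s = 6 ∨ s = 8 ∨ 10 ≤ s) with rfl | rfl | h10
    · rw [Bv6 (2*t+9) (by omega)]; exact LCore (2*t+9) (by omega) r 1 (by tauto)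
    · rw [Bv8 (2*t+9) (by omega)]; exact LCore (2*t+9) (by omega) r 3 (by tauto)
    · obtain ⟨m, rfl⟩ : ∃ m, s = 2*m+10 := ⟨(s-10)/2, by omega⟩
      rw [stepBD (2*t+9) m (by omega)]
      exact ih (2*m+6) (by omega) (by omega) (by omega) (by omega)

lemma LAodd (t : ℕ) :
    ∀ r s, s % 2 = 1 → 5 ≤ s → s ≤ 2*t+7 → 4*t+11 ≤ s + 4*r →
      anStar (2*t+9) s (wBs r ++ wT) = 0 := by
  intro r
  induction r with
  | zero => intro s h2 h5 hle hb; omega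
  | succ r ih =>
    intro s h2 h5 hle hb
    rw [wBs_succ_append]
    rcases (by omega : s ≤ 2*t+3 ∨ s = 2*t+5 ∨ s = 2*t+7) with h | rfl | rfl
    · obtain ⟨m, rfl⟩ : ∃ m, s = 2*m+5 := ⟨(s-5)/2, by omega⟩
      rw [stepBA (2*t+9) m (by omega)]
      exact ih (2*m+9) (by omega) (by omega) (by omega) (by omega)
    · rw [stepBn4odd (2*t+9) t rfl]
      exact LDodd t r (2*t+8) (by omega) (by omega) (by omega) (by omega)
    · rw [stepBn2odd (2*t+9) t rfl]
      exact LDodd t r (2*t+6) (by omega) (by omega) (by omega) (by omega)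

lemma upperOdd (t : ℕ) :
    ∀ q, q < 2*t+9 → anStar (2*t+9) q (wP ++ (wBs (t+1) ++ wT)) = 0 := by
  intro q hq
  have h9 : (9:ℕ) ≤ 2*t+9 := by omega
  rcases Nat.lt_or_ge q 7 with h7 | h7
  · interval_cases q
    · rw [P0 (2*t+9) h9]; exact LCore (2*t+9) h9 (t+1) 0 (by tauto)
    · rw [P1 (2*t+9) h9]; exact LCore (2*t+9) h9 (t+1) 0 (by tauto)
    · rw [P2 (2*t+9) h9]; exact LCore (2*t+9) h9 (t+1) 3 (by tauto)
    · rw [P3 (2*t+9) h9]; exact LCore (2*t+9) h9 (t+1) 0 (by tauto)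
    · rw [P4 (2*t+9) h9]; exact LCore (2*t+9) h9 (t+1) 1 (by tauto)
    · rw [P5 (2*t+9) h9]; exact LCore (2*t+9) h9 (t+1) 6 (by tauto)
    · rw [P6 (2*t+9) h9]; exact LCore (2*t+9) h9 (t+1) 0 (by tauto)
  · rcases (by omega : q % 2 = 1 ∨ q % 2 = 0) with h2 | h2
    · rcases (by omega : q ≤ 2*t+5 ∨ q = 2*t+7) with h | rfl
      · obtain ⟨m, rfl⟩ : ∃ m, q = 2*m+7 := ⟨(q-7)/2, by omega⟩
        rw [stepPodd (2*t+9) m (by omega)]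
        exact LDodd t (t+1) (2*m+8) (by omega) (by omega) (by omega) (by omega)
      · rw [stepPn2odd (2*t+9) t rfl]
        exact LDodd t (t+1) (2*t+8) (by omega) (by omega) (by omega) (by omega)
    · obtain ⟨m, rfl⟩ : ∃ m, q = 2*m+8 := ⟨(q-8)/2, by omega⟩
      rw [stepPeven (2*t+9) m (by omega)]
      exact LAodd t (t+1) (2*m+7) (by omega) (by omega) (by omega) (by omega)

/-! ### Even case -/

lemma LCoreE (t : ℕ) :
    ∀ r s, (s = 0 ∨ s = 1 ∨ s = 3 ∨ s = 6 ∨ s = 8 ∨ s = 10 ∨ s = 12) →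
      anStar (2*t+16) s (wBs r ++ (wE ++ wT)) = 0 := by
  have h16 : (16:ℕ) ≤ 2*t+16 := by omega
  intro r
  induction r with
  | zero =>
    intro s hs
    have e : wBs 0 ++ (wE ++ wT) = wE ++ wT := by simp [wBs]
    rw [e]
    rcases hs with rfl | rfl | rfl | rfl | rfl | rfl | rfl
    · exact EK0 _ h16
    · exact EK1 _ h16
    · exact EK3 _ h16
    · exact EK6 _ h16
    · exact EK8 _ h16
    · exact EK10 _ h16
    · exact EK12 _ h16
  | succ r ih =>
    intro s hs
    rw [wBs_succ_append]
    rcases hs with rfl | rfl | rfl | rfl | rfl | rfl | rfl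
    · rw [Bv0 _ (by omega)]; exact ih 0 (by tauto)
    · rw [Bv1 _ (by omega)]; exact ih 0 (by tauto)
    · rw [Bv3 _ (by omega)]; exact ih 0 (by tauto)
    · rw [Bv6 _ (by omega)]; exact ih 1 (by tauto)
    · rw [Bv8 _ (by omega)]; exact ih 3 (by tauto)
    · rw [Bv10 _ h16]; exact ih 6 (by tauto)
    · rw [Bv12 _ h16]; exact ih 8 (by tauto)

lemma LDe (t : ℕ) :
    ∀ r s, s % 2 = 0 → 6 ≤ s → s ≤ 2*t+15 → s ≤ 4*r+12 →
      anStar (2*t+16) s (wBs r ++ (wE ++ wT)) = 0 := by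
  intro r
  induction r with
  | zero =>
    intro s h2 h6 hle hb
    rcases (by omega : s = 6 ∨ s = 8 ∨ s = 10 ∨ s = 12) with rfl | rfl | rfl | rfl <;>
      exact LCoreE t 0 _ (by tauto)
  | succ r ih =>
    intro s h2 h6 hle hb
    rcases (by omega : s = 6 ∨ s = 8 ∨ s = 10 ∨ s = 12 ∨ 14 ≤ s) with rfl | rfl | rfl | rfl | h14
    · exact LCoreE t (r+1) _ (by tauto)
    · exact LCoreE t (r+1) _ (by tauto)
    · exact LCoreE t (r+1) _ (by tauto)
    · exact LCoreE t (r+1) _ (by tauto)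
    · rw [wBs_succ_append]
      obtain ⟨m, hm, rfl⟩ : ∃ m, 2 ≤ m ∧ s = 2*m+10 := ⟨(s-10)/2, by omega, by omega⟩
      rw [stepBD (2*t+16) m (by omega)]
      exact ih (2*m+6) (by omega) (by omega) (by omega) (by omega)

lemma LAe (t : ℕ) :
    ∀ r s, s % 2 = 1 → 5 ≤ s → s ≤ 2*t+15 → 4*t+19 ≤ s + 4*r →
      anStar (2*t+16) s (wBs r ++ (wE ++ wT)) = 0 := by
  intro r
  induction r with
  | zero => intro s h2 h5 hle hb; omega
  | succ r ih =>
    intro s h2 h5 hle hb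
    rw [wBs_succ_append]
    rcases (by omega : s ≤ 2*t+9 ∨ s = 2*t+11 ∨ s = 2*t+13 ∨ s = 2*t+15)
      with h | rfl | rfl | rfl
    · obtain ⟨m, rfl⟩ : ∃ m, s = 2*m+5 := ⟨(s-5)/2, by omega⟩
      rw [stepBA (2*t+16) m (by omega)]
      exact ih (2*m+9) (by omega) (by omega) (by omega) (by omega)
    · rw [stepBn5e (2*t+16) t rfl]
      exact ih (2*t+15) (by omega) (by omega) (by omega) (by omega)
    · rw [stepBn3e (2*t+16) t rfl]
      exact LDe t r (2*t+14) (by omega) (by omega) (by omega) (by omega)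
    · rw [stepBn1e (2*t+16) t rfl]
      exact LDe t r (2*t+12) (by omega) (by omega) (by omega) (by omega)

lemma upperEven (t : ℕ) :
    ∀ q, q < 2*t+16 → anStar (2*t+16) q (wP ++ (wBs (t+3) ++ (wE ++ wT))) = 0 := by
  intro q hq
  have h9 : (9:ℕ) ≤ 2*t+16 := by omega
  rcases Nat.lt_or_ge q 7 with h7 | h7
  · interval_cases q
    · rw [P0 _ h9]; exact LCoreE t (t+3) 0 (by tauto)
    · rw [P1 _ h9]; exact LCoreE t (t+3) 0 (by tauto)
    · rw [P2 _ h9]; exact LCoreE t (t+3) 3 (by tauto)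
    · rw [P3 _ h9]; exact LCoreE t (t+3) 0 (by tauto)
    · rw [P4 _ h9]; exact LCoreE t (t+3) 1 (by tauto)
    · rw [P5 _ h9]; exact LCoreE t (t+3) 6 (by tauto)
    · rw [P6 _ h9]; exact LCoreE t (t+3) 0 (by tauto)
  · rcases (by omega : q % 2 = 1 ∨ q % 2 = 0) with h2 | h2
    · rcases (by omega : q ≤ 2*t+11 ∨ q = 2*t+13 ∨ q = 2*t+15) with h | rfl | rfl
      · obtain ⟨m, rfl⟩ : ∃ m, q = 2*m+7 := ⟨(q-7)/2, by omega⟩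
        rw [stepPodd (2*t+16) m (by omega)]
        exact LDe t (t+3) (2*m+8) (by omega) (by omega) (by omega) (by omega)
      · rw [stepPn3e (2*t+16) t rfl]
        exact LDe t (t+3) (2*t+14) (by omega) (by omega) (by omega) (by omega)
      · rw [stepPn1e (2*t+16) t rfl]
        exact LAe t (t+3) (2*t+15) (by omega) (by omega) (by omega) (by omega)
    · obtain ⟨m, rfl⟩ : ∃ m, q = 2*m+8 := ⟨(q-8)/2, by omega⟩
      rw [stepPeven (2*t+16) m (by omega)]
      exact LAe t (t+3) (2*m+7) (by omega) (by omega) (by omega) (by omega)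

/-! ### The full reset word -/

def anWord (n : ℕ) : List Letter :=
  if n % 2 = 1 then wP ++ (wBs ((n-7)/2) ++ wT)
  else wP ++ (wBs ((n-10)/2) ++ (wE ++ wT))

lemma anWord_length (n : ℕ) (hn : n = 7 ∨ 9 ≤ n) : (anWord n).length = 4*n - 13 := by
  rcases (by omega : n % 2 = 1 ∨ n % 2 = 0) with h | h
  · rw [anWord, if_pos h]
    simp [wP, wT, wBs_length]
    omega
  · rw [anWord, if_neg (by omega)]
    simp [wP, wT, wE, wBs_length]
    omega

lemma upper (n : ℕ) (hn : n = 7 ∨ 9 ≤ n) : ∀ q, q < n → anStar n q (anWord n) = 0 := by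
  rcases hn with rfl | h9
  · intro q hq
    interval_cases q <;> norm_num [anWord, anStar, anDelta, wP, wB, wE, wT, wBs]
  · rcases (by omega : n % 2 = 1 ∨ n % 2 = 0) with h | h
    · obtain ⟨t, rfl⟩ : ∃ t, n = 2*t+9 := ⟨(n-9)/2, by omega⟩
      have e : anWord (2*t+9) = wP ++ (wBs (t+1) ++ wT) := by
        have h2 : (2*t+9-7)/2 = t+1 := by omega
        rw [anWord, if_pos (by omega), h2]
      rw [e]
      exact upperOdd t
    · rcases (by omega : n = 10 ∨ n = 12 ∨ n = 14 ∨ 16 ≤ n) with rfl | rfl | rfl | h16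
      · intro q hq
        interval_cases q <;> norm_num [anWord, anStar, anDelta, wP, wB, wE, wT, wBs]
      · intro q hq
        interval_cases q <;> norm_num [anWord, anStar, anDelta, wP, wB, wE, wT, wBs]
      · intro q hq
        interval_cases q <;> norm_num [anWord, anStar, anDelta, wP, wB, wE, wT, wBs]
      · obtain ⟨t, rfl⟩ : ∃ t, n = 2*t+16 := ⟨(n-16)/2, by omega⟩
        have e : anWord (2*t+16) = wP ++ (wBs (t+3) ++ (wE ++ wT)) := by
          have h2 : (2*t+16-10)/2 = t+3 := by omega
          rw [anWord, if_neg (by omega), h2]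
        rw [e]
        exact upperEven t
/-! ### Lower bound: the potential argument -/

def Sset (n : ℕ) (v : List Letter) : Finset ℕ :=
  (Finset.range n).filter (fun q => anStar n q v = 0)

lemma mem_Sset {n : ℕ} {v : List Letter} {q : ℕ} :
    q ∈ Sset n v ↔ q < n ∧ anStar n q v = 0 := by
  simp [Sset]

/-- right inverse of letter `a` (on states other than `1`). -/
def gA (n s : ℕ) : ℕ :=
  if s = 0 then 0 else if s = 1 then 0 else if s = 2 then 3 else if s = 3 then 4
  else if s = 4 then 2 else if s % 2 = 1 then (if s = n - 1 then s else s + 1) else s - 1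

/-- inverse of the permutation given by letter `b`. -/
def gB (n s : ℕ) : ℕ :=
  if s = 0 then 0 else if s = 1 then 2 else if s = 2 then 3 else if s = 3 then 1
  else if s = 4 then 5 else if s = 5 then 4
  else if s % 2 = 0 then (if s = n - 1 then s else s + 1) else s - 1

lemma gA_odd (n s : ℕ) (h2 : s % 2 = 1) (h5 : 5 ≤ s) :
    gA n s = if s = n - 1 then s else s + 1 := by
  unfold gA
  rw [if_neg (by omega), if_neg (by omega), if_neg (by omega), if_neg (by omega),
    if_neg (by omega), if_pos h2]

lemma gA_even (n s : ℕ) (h2 : s % 2 = 0) (h6 : 6 ≤ s) : gA n s = s - 1 := by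
  unfold gA
  rw [if_neg (by omega), if_neg (by omega), if_neg (by omega), if_neg (by omega),
    if_neg (by omega), if_neg (by omega)]

lemma gB_odd (n s : ℕ) (h2 : s % 2 = 1) (h7 : 7 ≤ s) : gB n s = s - 1 := by
  unfold gB
  rw [if_neg (by omega), if_neg (by omega), if_neg (by omega), if_neg (by omega),
    if_neg (by omega), if_neg (by omega), if_neg (by omega)]

lemma gB_even (n s : ℕ) (h2 : s % 2 = 0) (h6 : 6 ≤ s) :
    gB n s = if s = n - 1 then s else s + 1 := by
  unfold gB
  rw [if_neg (by omega), if_neg (by omega), if_neg (by omega), if_neg (by omega),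
    if_neg (by omega), if_neg (by omega), if_pos h2]

lemma dA_sym (n q : ℕ) (h5 : 5 ≤ q) : anDelta n q Letter.a
    = if q % 2 = 1 then (if q = n - 1 then q else q + 1) else q - 1 := by
  obtain ⟨t, rfl⟩ : ∃ t, q = t + 5 := ⟨q - 5, by omega⟩
  rfl

lemma dB_sym (n q : ℕ) (h5 : 5 ≤ q) : anDelta n q Letter.b
    = if q % 2 = 0 then (if q = n - 1 then q else q + 1) else q - 1 := by
  obtain ⟨t, rfl⟩ : ∃ t, q = t + 5 := ⟨q - 5, by omega⟩
  rfl

lemma d4b_sym (n : ℕ) : anDelta n 4 Letter.b = if 4 = n - 1 then 4 else 5 := rfl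
lemma d6b_sym (n : ℕ) : anDelta n 6 Letter.b = if 6 = n - 1 then 6 else 7 := by
  have := dB_sym n 6 (by omega); simpa using this
lemma d5a_sym (n : ℕ) : anDelta n 5 Letter.a = if 5 = n - 1 then 5 else 6 := by
  have := dA_sym n 5 (by omega); simpa using this
lemma d6a (n : ℕ) : anDelta n 6 Letter.a = 5 := by
  have := dA_sym n 6 (by omega); simpa using this
lemma d5b (n : ℕ) : anDelta n 5 Letter.b = 4 := by
  have := dB_sym n 5 (by omega); simpa using this

lemma anDelta_lt (n : ℕ) (hn : 7 ≤ n) (l : Letter) (q : ℕ) (hq : q < n) :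
    anDelta n q l < n := by
  rcases Nat.lt_or_ge q 5 with h5 | h5
  · interval_cases q <;> cases l <;>
      simp only [d0a, d0b, d1a, d1b, d2a, d2b, d3a, d3b, d4a, d4b_sym] <;>
      first
        | omega
        | (split_ifs <;> omega)
  · cases l
    · rw [dA_sym n q h5]; split_ifs <;> omega
    · rw [dB_sym n q h5]; split_ifs <;> omega

lemma gB_db (n : ℕ) (hn : 7 ≤ n) (q : ℕ) (hq : q < n) :
    gB n (anDelta n q Letter.b) = q := by
  rcases Nat.lt_or_ge q 7 with h7 | h7
  · interval_cases q
    · simp [d0b, gB]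
    · simp [d1b, gB]
    · simp [d2b, gB]
    · simp [d3b, gB]
    · rw [d4b_sym, if_neg (by omega)]; simp [gB]
    · rw [d5b]; simp [gB]
    · rw [d6b_sym]
      by_cases h : (6:ℕ) = n - 1
      · rw [if_pos h, gB_even n 6 (by omega) (by omega), if_pos h]
      · rw [if_neg h, gB_odd n 7 (by omega) (by omega)]
  · rcases (by omega : q % 2 = 1 ∨ q % 2 = 0) with h2 | h2
    · rw [dB_sym n q (by omega), if_neg (by omega)]
      rw [gB_even n (q-1) (by omega) (by omega), if_neg (by omega)]
      omega
    · rw [dB_sym n q (by omega), if_pos h2]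
      by_cases h : q = n - 1
      · rw [if_pos h, gB_even n q h2 (by omega), if_pos h]
      · rw [if_neg h, gB_odd n (q+1) (by omega) (by omega)]
        omega

lemma db_gB (n : ℕ) (hn : 7 ≤ n) (s : ℕ) (hs : s < n) :
    gB n s < n ∧ anDelta n (gB n s) Letter.b = s := by
  rcases Nat.lt_or_ge s 6 with h6 | h6
  · interval_cases s
    · simp [gB, d0b]; omega
    · simp [gB, d2b]; omega
    · simp [gB, d3b]; omega
    · simp [gB, d1b]; omega
    · simp only [show gB n 4 = 5 from by simp [gB]]
      rw [d5b]; omega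
    · simp only [show gB n 5 = 4 from by simp [gB]]
      rw [d4b_sym, if_neg (by omega)]; omega
  · rcases (by omega : s % 2 = 1 ∨ s % 2 = 0) with h2 | h2
    · rw [gB_odd n s h2 (by omega)]
      rw [dB_sym n (s-1) (by omega), if_pos (by omega), if_neg (by omega)]
      omega
    · rw [gB_even n s h2 h6]
      by_cases h : s = n - 1
      · rw [if_pos h, dB_sym n s (by omega), if_pos h2, if_pos h]
        omega
      · rw [if_neg h, dB_sym n (s+1) (by omega), if_neg (by omega)]
        omega

lemma card_Sset_b (n : ℕ) (hn : 7 ≤ n) (v : List Letter) :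
    (Sset n (Letter.b :: v)).card = (Sset n v).card := by
  apply Finset.card_nbij' (i := fun q => anDelta n q Letter.b) (j := gB n)
  · intro q hq
    rw [Finset.mem_coe, mem_Sset] at hq ⊢
    exact ⟨anDelta_lt n hn Letter.b q hq.1, hq.2⟩
  · intro s hs
    rw [Finset.mem_coe, mem_Sset] at hs ⊢
    obtain ⟨h1, h2⟩ := db_gB n hn s hs.1
    refine ⟨h1, ?_⟩
    rw [anStar_cons, h2]
    exact hs.2
  · intro q hq
    exact gB_db n hn q (mem_Sset.mp hq).1
  · intro s hs
    exact (db_gB n hn s (mem_Sset.mp hs).1).2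

lemma dA_ne_one (n : ℕ) (q : ℕ) : anDelta n q Letter.a ≠ 1 := by
  rcases Nat.lt_or_ge q 5 with h5 | h5
  · interval_cases q <;> simp [d0a, d1a, d2a, d3a, d4a]
  · rw [dA_sym n q h5]; split_ifs <;> omega

lemma gA_da (n : ℕ) (hn : 7 ≤ n) (q : ℕ) (hq : q < n) (h1 : q ≠ 1) :
    gA n (anDelta n q Letter.a) = q := by
  rcases Nat.lt_or_ge q 5 with h5 | h5
  · interval_cases q
    · simp [d0a, gA]
    · omega
    · simp [d2a, gA]
    · simp [d3a, gA]
    · simp [d4a, gA]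
  · rcases (by omega : q % 2 = 1 ∨ q % 2 = 0) with h2 | h2
    · rw [dA_sym n q h5, if_pos h2]
      by_cases h : q = n - 1
      · rw [if_pos h, gA_odd n q h2 h5, if_pos h]
      · rw [if_neg h, gA_even n (q+1) (by omega) (by omega)]
        omega
    · rw [dA_sym n q h5, if_neg (by omega)]
      rw [gA_odd n (q-1) (by omega) (by omega), if_neg (by omega)]
      omega

lemma da_gA (n : ℕ) (hn : 7 ≤ n) (s : ℕ) (hs : s < n) (h1 : s ≠ 1) :
    gA n s < n ∧ gA n s ≠ 1 ∧ anDelta n (gA n s) Letter.a = s := by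
  rcases Nat.lt_or_ge s 5 with h5 | h5
  · interval_cases s
    · simp [gA, d0a]; omega
    · omega
    · simp only [show gA n 2 = 3 from by simp [gA]]
      rw [d3a]; omega
    · simp only [show gA n 3 = 4 from by simp [gA]]
      rw [d4a]; omega
    · simp only [show gA n 4 = 2 from by simp [gA]]
      rw [d2a]; omega
  · rcases (by omega : s % 2 = 1 ∨ s % 2 = 0) with h2 | h2
    · rw [gA_odd n s h2 h5]
      by_cases h : s = n - 1
      · rw [if_pos h, dA_sym n s h5, if_pos h2, if_pos h]
        omega
      · rw [if_neg h, dA_sym n (s+1) (by omega), if_neg (by omega)]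
        omega
    · rw [gA_even n s h2 (by omega)]
      rw [dA_sym n (s-1) (by omega), if_pos (by omega), if_neg (by omega)]
      omega

lemma card_Sset_a (n : ℕ) (hn : 7 ≤ n) (v : List Letter) :
    (Sset n (Letter.a :: v)).card + (if 1 ∈ Sset n v then 1 else 0)
      = (Sset n v).card + 1 := by
  have h1mem : 1 ∈ Sset n (Letter.a :: v) := by
    rw [mem_Sset]
    refine ⟨by omega, ?_⟩
    rw [anStar_cons, d1a]
    exact anStar_zero n v
  have key : ((Sset n (Letter.a :: v)).erase 1).card = ((Sset n v).erase 1).card := by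
    apply Finset.card_nbij' (i := fun q => anDelta n q Letter.a) (j := gA n)
    · intro q hq
      rw [Finset.mem_coe, Finset.mem_erase, mem_Sset] at hq
      rw [Finset.mem_coe, Finset.mem_erase, mem_Sset]
      exact ⟨dA_ne_one n q, anDelta_lt n hn Letter.a q hq.2.1, hq.2.2⟩
    · intro s hs
      rw [Finset.mem_coe, Finset.mem_erase, mem_Sset] at hs
      obtain ⟨hlt, hne, heq⟩ := da_gA n hn s hs.2.1 hs.1
      rw [Finset.mem_coe, Finset.mem_erase, mem_Sset]
      refine ⟨hne, hlt, ?_⟩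
      rw [anStar_cons, heq]
      exact hs.2.2
    · intro q hq
      rw [Finset.mem_coe, Finset.mem_erase, mem_Sset] at hq
      exact gA_da n hn q hq.2.1 hq.1
    · intro s hs
      rw [Finset.mem_coe, Finset.mem_erase, mem_Sset] at hs
      exact (da_gA n hn s hs.2.1 hs.1).2.2
  have e1 : ((Sset n (Letter.a :: v)).erase 1).card + 1 = (Sset n (Letter.a :: v)).card :=
    Finset.card_erase_add_one h1mem
  by_cases h : 1 ∈ Sset n v
  · have e2 : ((Sset n v).erase 1).card + 1 = (Sset n v).card :=
      Finset.card_erase_add_one h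
    rw [if_pos h]
    omega
  · have e2 : (Sset n v).erase 1 = Sset n v := Finset.erase_eq_of_notMem h
    rw [if_neg h]
    rw [e2] at key
    omega
def cf : Bool → Bool → Bool → Bool → Bool → Bool → ℤ
  | false, false, false, false, false, false => 0
  | false, false, false, false, false, true => 0
  | false, false, false, false, true, false => 0
  | false, false, false, false, true, true => 0
  | false, false, false, true, false, false => 0
  | false, false, false, true, false, true => 0
  | false, false, false, true, true, false => 0
  | false, false, false, true, true, true => 0
  | false, false, true, false, false, false => 1
  | false, false, true, false, false, true => 1
  | false, false, true, false, true, false => 1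
  | false, false, true, false, true, true => 1
  | false, false, true, true, false, false => 2
  | false, false, true, true, false, true => 2
  | false, false, true, true, true, false => 3
  | false, false, true, true, true, true => 3
  | false, true, false, false, false, false => 2
  | false, true, false, false, false, true => 2
  | false, true, false, false, true, false => 3
  | false, true, false, false, true, true => 3
  | false, true, false, true, false, false => 2
  | false, true, false, true, false, true => 2
  | false, true, false, true, true, false => 4
  | false, true, false, true, true, true => 4
  | false, true, true, false, false, false => 4
  | false, true, true, false, false, true => 4
  | false, true, true, false, true, false => 5
  | false, true, true, false, true, true => 5
  | false, true, true, true, false, false => 6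
  | false, true, true, true, false, true => 6
  | false, true, true, true, true, false => 6
  | false, true, true, true, true, true => 6
  | true, false, false, false, false, false => 3
  | true, false, false, false, false, true => 3
  | true, false, false, false, true, false => 3
  | true, false, false, false, true, true => 3
  | true, false, false, true, false, false => 4
  | true, false, false, true, false, true => 4
  | true, false, false, true, true, false => 5
  | true, false, false, true, true, true => 5
  | true, false, true, false, false, false => 5
  | true, false, true, false, false, true => 6
  | true, false, true, false, true, false => 5
  | true, false, true, false, true, true => 6
  | true, false, true, true, false, false => 7
  | true, false, true, true, false, true => 8
  | true, false, true, true, true, false => 7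
  | true, false, true, true, true, true => 8
  | true, true, false, false, false, false => 5
  | true, true, false, false, false, true => 5
  | true, true, false, false, true, false => 7
  | true, true, false, false, true, true => 7
  | true, true, false, true, false, false => 6
  | true, true, false, true, false, true => 6
  | true, true, false, true, true, false => 7
  | true, true, false, true, true, true => 7
  | true, true, true, false, false, false => 6
  | true, true, true, false, false, true => 7
  | true, true, true, false, true, false => 8
  | true, true, true, false, true, true => 8
  | true, true, true, true, false, false => 9
  | true, true, true, true, false, true => 9
  | true, true, true, true, true, false => 9
  | true, true, true, true, true, true => 9

/-- feature: does state `j` die under `v`? -/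
def xB (n j : ℕ) (v : List Letter) : Bool := decide (anStar n j v = 0)

lemma cf_a : ∀ b1 b2 b3 b4 b5 b6 : Bool,
    cf b1 b2 b3 b4 b5 b6 + (if b1 then -1 else 3) ≤ cf true b4 b2 b3 b6 b5 := by decide

lemma cf_b : ∀ b1 b2 b3 b4 b5 b6 t : Bool,
    cf b1 b2 b3 b4 b5 b6 - 1 ≤ cf b3 b1 b2 b5 b4 t := by decide

lemma cf_nonneg : ∀ b1 b2 b3 b4 b5 b6 : Bool, 0 ≤ cf b1 b2 b3 b4 b5 b6 := by decide

lemma xB1a (n : ℕ) (v : List Letter) : xB n 1 (Letter.a :: v) = true := by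
  simp [xB, anStar_cons, d1a, anStar_zero]
lemma xB2a (n : ℕ) (v : List Letter) : xB n 2 (Letter.a :: v) = xB n 4 v := by
  simp only [xB, anStar_cons, d2a]
  rfl
lemma xB3a (n : ℕ) (v : List Letter) : xB n 3 (Letter.a :: v) = xB n 2 v := by
  simp only [xB, anStar_cons, d3a]
  rfl
lemma xB4a (n : ℕ) (v : List Letter) : xB n 4 (Letter.a :: v) = xB n 3 v := by
  simp only [xB, anStar_cons, d4a]
  rfl
lemma xB5a (n : ℕ) (hn : 7 ≤ n) (v : List Letter) : xB n 5 (Letter.a :: v) = xB n 6 v := by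
  simp only [xB, anStar_cons, d5a_sym, if_neg (by omega : ¬(5 = n - 1))]
lemma xB6a (n : ℕ) (v : List Letter) : xB n 6 (Letter.a :: v) = xB n 5 v := by
  simp only [xB, anStar_cons, d6a]
lemma xB1b (n : ℕ) (v : List Letter) : xB n 1 (Letter.b :: v) = xB n 3 v := by
  simp only [xB, anStar_cons, d1b]
  rfl
lemma xB2b (n : ℕ) (v : List Letter) : xB n 2 (Letter.b :: v) = xB n 1 v := by
  simp only [xB, anStar_cons, d2b]
  rfl
lemma xB3b (n : ℕ) (v : List Letter) : xB n 3 (Letter.b :: v) = xB n 2 v := by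
  simp only [xB, anStar_cons, d3b]
  rfl
lemma xB4b (n : ℕ) (hn : 7 ≤ n) (v : List Letter) : xB n 4 (Letter.b :: v) = xB n 5 v := by
  simp only [xB, anStar_cons, d4b_sym, if_neg (by omega : ¬(4 = n - 1))]
lemma xB5b (n : ℕ) (v : List Letter) : xB n 5 (Letter.b :: v) = xB n 4 v := by
  simp only [xB, anStar_cons, d5b]

lemma pot (n : ℕ) (hn : 7 ≤ n) : ∀ v : List Letter,
    4 * ((Sset n v).card : ℤ) ≤ 4 + v.length
      + cf (xB n 1 v) (xB n 2 v) (xB n 3 v) (xB n 4 v) (xB n 5 v) (xB n 6 v) := by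
  intro v
  induction v with
  | nil =>
    have hS : Sset n [] = {0} := by
      ext q
      rw [mem_Sset, Finset.mem_singleton]
      constructor
      · rintro ⟨_, h⟩; exact h
      · rintro rfl; exact ⟨by omega, rfl⟩
    have hx : ∀ j, 1 ≤ j → xB n j [] = false := by
      intro j hj
      simp only [xB, decide_eq_false_iff_not]
      show ¬ (j = 0)
      omega
    rw [hS, hx 1 (by omega), hx 2 (by omega), hx 3 (by omega), hx 4 (by omega),
      hx 5 (by omega), hx 6 (by omega)]
    show (4:ℤ) * 1 ≤ 4 + 0 + 0
    norm_num
  | cons l v ih =>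
    cases l
    case a =>
      rw [xB1a, xB2a, xB3a, xB4a, xB5a n hn, xB6a]
      have hc := card_Sset_a n hn v
      have hm : (1 ∈ Sset n v) ↔ anStar n 1 v = 0 := by
        rw [mem_Sset]
        exact ⟨fun h => h.2, fun h => ⟨by omega, h⟩⟩
      have hlen : ((Letter.a :: v).length : ℤ) = v.length + 1 := by simp
      cases h1 : xB n 1 v
      · have h1' : ¬ (1 ∈ Sset n v) := by
          rw [hm]
          simpa [xB] using h1
        rw [if_neg h1'] at hc
        have hb := cf_a false (xB n 2 v) (xB n 3 v) (xB n 4 v) (xB n 5 v) (xB n 6 v)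
        norm_num at hb
        rw [h1] at ih
        have hc' : ((Sset n (Letter.a :: v)).card : ℤ) = (Sset n v).card + 1 := by
          exact_mod_cast congrArg (Nat.cast (R := ℤ)) (by omega : (Sset n (Letter.a :: v)).card = (Sset n v).card + 1)
        rw [hlen, hc']
        linarith
      · have h1' : (1 ∈ Sset n v) := by
          rw [hm]
          simpa [xB] using h1
        rw [if_pos h1'] at hc
        have hb := cf_a true (xB n 2 v) (xB n 3 v) (xB n 4 v) (xB n 5 v) (xB n 6 v)
        norm_num at hb
        rw [h1] at ih
        have hc' : ((Sset n (Letter.a :: v)).card : ℤ) = (Sset n v).card := by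
          exact_mod_cast congrArg (Nat.cast (R := ℤ)) (by omega : (Sset n (Letter.a :: v)).card = (Sset n v).card)
        rw [hlen, hc']
        linarith
    case b =>
      rw [xB1b, xB2b, xB3b, xB4b n hn, xB5b]
      have hb := cf_b (xB n 1 v) (xB n 2 v) (xB n 3 v) (xB n 4 v) (xB n 5 v) (xB n 6 v)
        (xB n 6 (Letter.b :: v))
      have hc' : ((Sset n (Letter.b :: v)).card : ℤ) = (Sset n v).card := by
        exact_mod_cast congrArg (Nat.cast (R := ℤ)) (card_Sset_b n hn v)
      have hlen : ((Letter.b :: v).length : ℤ) = v.length + 1 := by simp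
      rw [hlen, hc']
      linarith

lemma lower (n : ℕ) (hn : 7 ≤ n) (w : List Letter) (hw : ∀ q, q < n → anStar n q w = 0) :
    4 * n - 13 ≤ w.length := by
  have hp := pot n hn w
  have hS : Sset n w = Finset.range n :=
    Finset.filter_true_of_mem (fun q hq => hw q (Finset.mem_range.mp hq))
  have hx : ∀ j, j < n → xB n j w = true := by
    intro j hj
    simp [xB, hw j hj]
  rw [hS, Finset.card_range, hx 1 (by omega), hx 2 (by omega), hx 3 (by omega),
    hx 4 (by omega), hx 5 (by omega), hx 6 (by omega)] at hp
  have h9 : cf true true true true true true = 9 := rfl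
  rw [h9] at hp
  omega

/-- For every `n` with `n = 7` or `n ≥ 9`, the reset threshold of the
automaton `𝒜ₙ` is exactly `4n - 13`. -/
theorem an_resetThreshold_eq (n : ℕ) (hn : n = 7 ∨ 9 ≤ n) :
    anResetThreshold n = 4 * n - 13 := by
  have h7 : 7 ≤ n := by omega
  have hmem : (4 * n - 13) ∈ {l : ℕ | ∃ w : List Letter,
      (∀ p q : ℕ, p < n → q < n → anStar n p w = anStar n q w) ∧ w.length = l} := by
    refine ⟨anWord n, fun p q hp hq => ?_, anWord_length n hn⟩
    rw [upper n hn p hp, upper n hn q hq]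
  refine le_antisymm (Nat.sInf_le hmem) (le_csInf ⟨_, hmem⟩ ?_)
  rintro l ⟨w, hw, rfl⟩
  refine lower n h7 w (fun q hq => ?_)
  rw [hw q 0 hq (by omega), anStar_zero]
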